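/- Fix a positive integer d and ε > 0. For every monomial f(t) = t^ν with 0 ≤ ν ≤ d, and all x, x', y, y', z ≥ 0, it holds that y·f(z+x+y) ≤ (1+ε)·y·f(z+x'+y) + (1+1/ε)^d · d^d · x·f(z+x+y'). -/

import Mathlib

set_option maxHeartbeats 1000000

open Finset

/-- AM-GM instance: `p₁ * p₂ * p₃ ^ k ≤ ((p₁ + p₂ + k·p₃)/(k+2))^(k+2)`. -/
lemma amgm_aux (k : ℕ) (p₁ p₂ p₃ : ℝ) (h₁ : 0 ≤ p₁) (h₂ : 0 ≤ p₂) (h₃ : 0 ≤ p₃) :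
    p₁ * p₂ * p₃ ^ k ≤ ((p₁ + p₂ + k * p₃) / (k + 2)) ^ (k + 2) := by
  have hk : (0:ℝ) < (k:ℝ) + 2 := by positivity
  have hkne : ((k:ℝ) + 2) ≠ 0 := ne_of_gt hk
  have hw : (1:ℝ)/((k:ℝ)+2) + 1/((k:ℝ)+2) + (k:ℝ)/((k:ℝ)+2) = 1 := by
    field_simp
    ring
  have h := Real.geom_mean_le_arith_mean3_weighted
    (by positivity) (by positivity) (by positivity) h₁ h₂ h₃ hw
  have hL : 0 ≤ p₁ ^ ((1:ℝ)/((k:ℝ)+2)) * p₂ ^ ((1:ℝ)/((k:ℝ)+2)) * p₃ ^ ((k:ℝ)/((k:ℝ)+2)) := by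
    positivity
  have h2 := pow_le_pow_left₀ hL h (k + 2)
  have e1 : (p₁ ^ ((1:ℝ)/((k:ℝ)+2))) ^ (k+2) = p₁ := by
    rw [← Real.rpow_natCast (p₁ ^ ((1:ℝ)/((k:ℝ)+2))) (k+2), ← Real.rpow_mul h₁]
    push_cast
    rw [one_div, inv_mul_cancel₀ hkne, Real.rpow_one]
  have e2 : (p₂ ^ ((1:ℝ)/((k:ℝ)+2))) ^ (k+2) = p₂ := by
    rw [← Real.rpow_natCast (p₂ ^ ((1:ℝ)/((k:ℝ)+2))) (k+2), ← Real.rpow_mul h₂]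
    push_cast
    rw [one_div, inv_mul_cancel₀ hkne, Real.rpow_one]
  have e3 : (p₃ ^ ((k:ℝ)/((k:ℝ)+2))) ^ (k+2) = p₃ ^ k := by
    rw [← Real.rpow_natCast (p₃ ^ ((k:ℝ)/((k:ℝ)+2))) (k+2), ← Real.rpow_mul h₃]
    push_cast
    rw [div_mul_cancel₀ _ hkne]
    try rw [Real.rpow_natCast]
  calc p₁ * p₂ * p₃ ^ k
      = (p₁ ^ ((1:ℝ)/((k:ℝ)+2)) * p₂ ^ ((1:ℝ)/((k:ℝ)+2)) * p₃ ^ ((k:ℝ)/((k:ℝ)+2))) ^ (k+2) := by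
        rw [mul_pow, mul_pow, e1, e2, e3]
    _ ≤ (1/((k:ℝ)+2) * p₁ + 1/((k:ℝ)+2) * p₂ + (k:ℝ)/((k:ℝ)+2) * p₃) ^ (k+2) := h2
    _ = ((p₁ + p₂ + (k:ℝ) * p₃) / ((k:ℝ) + 2)) ^ (k + 2) := by
        congr 1
        field_simp

/-- `a^n - c^n ≤ n (a-c) a^(n-1)` for `0 ≤ c ≤ a`. -/
lemma pow_sub_pow_le_aux (n : ℕ) (a c : ℝ) (hc : 0 ≤ c) (hca : c ≤ a) :
    a ^ n - c ^ n ≤ (n : ℝ) * (a - c) * a ^ (n - 1) := by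
  have ha : 0 ≤ a := hc.trans hca
  rw [← geom_sum₂_mul a c n]
  have hsum : (∑ i ∈ range n, a ^ i * c ^ (n - 1 - i)) ≤ (n : ℝ) * a ^ (n - 1) := by
    calc (∑ i ∈ range n, a ^ i * c ^ (n - 1 - i))
        ≤ ∑ _i ∈ range n, a ^ (n-1) := by
          apply Finset.sum_le_sum
          intro i hi
          calc a ^ i * c ^ (n - 1 - i) ≤ a ^ i * a ^ (n - 1 - i) := by
                apply mul_le_mul_of_nonneg_left (pow_le_pow_left₀ hc hca _) (pow_nonneg ha _)
            _ = a ^ (n - 1) := by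
                rw [← pow_add]; congr 1
                have := mem_range.mp hi; omega
      _ = (n : ℝ) * a ^ (n-1) := by rw [Finset.sum_const, card_range, nsmul_eq_mul]
  calc (∑ i ∈ range n, a ^ i * c ^ (n - 1 - i)) * (a - c)
      ≤ ((n:ℝ) * a ^ (n-1)) * (a - c) :=
        mul_le_mul_of_nonneg_right hsum (by linarith)
    _ = (n : ℝ) * (a - c) * a ^ (n-1) := by ring

/-- Core scalar inequality. -/
lemma core_aux (d n : ℕ) (hn : 1 ≤ n) (hnd : n ≤ d) (ε : ℝ) (hε : 0 < ε)
    (b x y : ℝ) (hx : 0 ≤ x) (hy : 0 ≤ y) (hyb : y ≤ b) :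
    y * (b + x) ^ n ≤ (1 + ε) * y * b ^ n + ((d:ℝ) * (1 + 1/ε)) ^ d * x ^ (n + 1) := by
  have hb : 0 ≤ b := hy.trans hyb
  have hnR : (0:ℝ) < n := by exact_mod_cast hn
  have hd : 1 ≤ d := hn.trans hnd
  have hdR : (0:ℝ) < d := by exact_mod_cast hd
  have hd1R : (1:ℝ) ≤ (d:ℝ) := by exact_mod_cast hd
  have hndR : (n:ℝ) ≤ d := by exact_mod_cast hnd
  set Q : ℝ := 1 + 1/ε with hQdef
  have hQ1 : 1 < Q := by
    have : 0 < 1/ε := by positivity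
    simp only [hQdef]; linarith
  have hQ0 : 0 < Q := by linarith
  set t : ℝ := ε / ((n:ℝ) * (1 + ε)) with htdef
  have ht : 0 < t := by positivity
  have htm : (n:ℝ) * t = 1 / Q := by
    rw [htdef, hQdef]; field_simp; ring
  clear_value Q t
  have hconst : (0:ℝ) ≤ ((d:ℝ) * Q) ^ d * x ^ (n+1) :=
    mul_nonneg (pow_nonneg (mul_nonneg hdR.le hQ0.le) d) (pow_nonneg hx _)
  -- K1 : (1+t)^n ≤ 1+ε
  have hK1 : (1 + t) ^ n ≤ 1 + ε := by
    have ht1 : t < 1 := by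
      have hn1R : (1:ℝ) ≤ (n:ℝ) := by exact_mod_cast hn
      rw [htdef, div_lt_one (by positivity)]
      nlinarith
    have hbern : 1 - (n:ℝ) * t ≤ (1 - t) ^ n := by
      have h := one_add_mul_le_pow (a := -t) (by linarith) n
      calc 1 - (n:ℝ)*t = 1 + (n:ℝ) * (-t) := by ring
        _ ≤ (1 + -t) ^ n := h
        _ = (1 - t) ^ n := by rw [← sub_eq_add_neg]
    have hprod : (1 + t) ^ n * (1 - (n:ℝ) * t) ≤ 1 := by
      calc (1 + t) ^ n * (1 - (n:ℝ) * t) ≤ (1 + t) ^ n * (1 - t) ^ n :=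
            mul_le_mul_of_nonneg_left hbern (pow_nonneg (by linarith) n)
        _ = ((1+t)*(1-t)) ^ n := by rw [mul_pow]
        _ = (1 - t^2) ^ n := by congr 1; ring
        _ ≤ 1 := pow_le_one₀ (by nlinarith) (by nlinarith)
    have hnt : 1 - (n:ℝ) * t = 1 / (1 + ε) := by
      have hne : (n:ℝ) * (1 + ε) ≠ 0 := by positivity
      rw [htdef]
      rw [eq_div_iff (by positivity : (1:ℝ) + ε ≠ 0)]
      field_simp
      ring
    rw [hnt] at hprod
    calc (1+t)^n = (1+t)^n * (1/(1+ε)) * (1+ε) := by field_simp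
      _ ≤ 1 * (1+ε) := mul_le_mul_of_nonneg_right hprod (by linarith)
      _ = 1 + ε := one_mul _
  rcases le_or_gt x (t * b) with hcase | hcase
  · -- small case
    have h1 : (b + x) ^ n ≤ (1 + ε) * b ^ n := by
      calc (b + x) ^ n ≤ ((1 + t) * b) ^ n :=
            pow_le_pow_left₀ (by linarith) (by nlinarith) n
        _ = (1+t)^n * b^n := mul_pow _ _ _
        _ ≤ (1 + ε) * b ^ n := mul_le_mul_of_nonneg_right hK1 (pow_nonneg hb n)
    calc y * (b+x)^n ≤ y * ((1+ε) * b^n) := mul_le_mul_of_nonneg_left h1 hy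
      _ = (1+ε) * y * b^n := by ring
      _ ≤ (1+ε) * y * b^n + ((d:ℝ) * Q) ^ d * x ^ (n+1) := by linarith
  · -- large case : t*b < x
    have hxtb : 0 ≤ x - t * b := by linarith
    have hK2 : (b+x)^n - (b + t*b)^n ≤ (n:ℝ) * (x - t*b) * (b+x)^(n-1) := by
      have := pow_sub_pow_le_aux n (b+x) (b + t*b) (by nlinarith) (by linarith)
      calc (b+x)^n - (b+t*b)^n ≤ (n:ℝ) * ((b+x) - (b+t*b)) * (b+x)^(n-1) := this
        _ = (n:ℝ) * (x - t*b) * (b+x)^(n-1) := by ring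
    -- KEY : n*b*(x - t*b)*(b+x)^(n-1) ≤ (d*Q)^d * x^(n+1)
    have hKEY : (n:ℝ) * b * (x - t*b) * (b+x)^(n-1) ≤ ((d:ℝ)*Q)^d * x^(n+1) := by
      set X : ℝ := (n:ℝ) * Q * x with hXdef
      clear_value X
      have hX0 : 0 ≤ X := by
        rw [hXdef]
        exact mul_nonneg (mul_nonneg hnR.le hQ0.le) hx
      have hbX : b ≤ X := by
        -- from t*b < x : b = (n*Q)*(t*b) < n*Q*x = X  (since n*t = 1/Q)
        have h1 : (n:ℝ) * Q * (t * b) = b := by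
          have : ((n:ℝ)*t) * (Q * b) = (1/Q) * (Q*b) := by rw [htm]
          calc (n:ℝ) * Q * (t*b) = ((n:ℝ)*t) * (Q*b) := by ring
            _ = (1/Q) * (Q*b) := by rw [htm]
            _ = b := by rw [one_div, inv_mul_cancel_left₀ (ne_of_gt hQ0)]
        have h3 : (n:ℝ) * Q * (t*b) < (n:ℝ) * Q * x :=
          mul_lt_mul_of_pos_left hcase (by positivity : (0:ℝ) < (n:ℝ)*Q)
        rw [hXdef]
        linarith
      -- AM-GM with p₁ = n*(X-b), p₂ = b, p₃ = b + X/n, k = n-1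
      obtain ⟨k, hk⟩ : ∃ k, n = k + 1 := ⟨n - 1, by omega⟩
      have hamgm := amgm_aux k ((n:ℝ)*(X - b)) b (b + X/(n:ℝ))
        (by nlinarith [hbX, hnR]) hb
        (by have := div_nonneg hX0 hnR.le; linarith)
      have hsum : (((n:ℝ)*(X-b) + b + (k:ℝ)*(b + X/(n:ℝ))) / ((k:ℝ)+2)) ≤ X := by
        have hkn : (k:ℝ) = (n:ℝ) - 1 := by
          have : (n:ℝ) = (k:ℝ) + 1 := by exact_mod_cast hk
          linarith
        rw [hkn, div_le_iff₀ (by linarith : (0:ℝ) < (n:ℝ) - 1 + 2)]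
        have expand : (n:ℝ)*(X-b) + b + ((n:ℝ)-1)*(b + X/(n:ℝ))
            = X * ((n:ℝ)^2 + (n:ℝ) - 1) / (n:ℝ) := by
          field_simp
          ring
        rw [expand, div_le_iff₀ hnR]
        nlinarith
      have hstep : (n:ℝ)*(X-b) * b * (b + X/(n:ℝ))^k ≤ X ^ (k+2) := by
        calc (n:ℝ)*(X-b) * b * (b + X/(n:ℝ))^k
            ≤ (((n:ℝ)*(X-b) + b + (k:ℝ)*(b + X/(n:ℝ))) / ((k:ℝ)+2)) ^ (k+2) := hamgm
          _ ≤ X ^ (k+2) := by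
              apply pow_le_pow_left₀ _ hsum
              have h1 : (0:ℝ) ≤ (n:ℝ)*(X-b) := mul_nonneg hnR.le (sub_nonneg.mpr hbX)
              have h2 : (0:ℝ) ≤ X/(n:ℝ) := div_nonneg hX0 hnR.le
              have h3 : (0:ℝ) ≤ (k:ℝ) := Nat.cast_nonneg k
              apply div_nonneg _ (by positivity)
              nlinarith
      -- now: n*b*(x-t*b)*(b+x)^(n-1) = (n*(X-b)) * b * (b+x)^(n-1) / (n*Q)
      have hrel : (n:ℝ) * Q * ((n:ℝ) * (x - t*b)) = (n:ℝ) * (X - b) := by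
        have h1 : (n:ℝ) * Q * (t * b) = b := by
          calc (n:ℝ) * Q * (t*b) = ((n:ℝ)*t) * (Q*b) := by ring
            _ = (1/Q) * (Q*b) := by rw [htm]
            _ = b := by rw [one_div, inv_mul_cancel_left₀ (ne_of_gt hQ0)]
        rw [hXdef]
        linear_combination (-(n:ℝ)) * h1
      have hbx : (b + x)^(n-1) ≤ (b + X/(n:ℝ))^k := by
        have hxX : x ≤ X / (n:ℝ) := by
          rw [hXdef, le_div_iff₀ hnR]
          nlinarith [mul_nonneg (mul_nonneg (sub_nonneg.mpr hQ1.le) hx) hnR.le]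
        have : n - 1 = k := by omega
        rw [this]
        exact pow_le_pow_left₀ (by linarith) (by linarith) k
      have hmain : (n:ℝ) * b * (x - t*b) * (b+x)^(n-1) * ((n:ℝ)*Q)
          ≤ X ^ (k+2) := by
        calc (n:ℝ) * b * (x - t*b) * (b+x)^(n-1) * ((n:ℝ)*Q)
            = ((n:ℝ)*Q*((n:ℝ)*(x - t*b))) * b * (b+x)^(n-1) := by ring
          _ = ((n:ℝ)*(X-b)) * b * (b+x)^(n-1) := by rw [hrel]
          _ ≤ ((n:ℝ)*(X-b)) * b * (b + X/(n:ℝ))^k := by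
              exact mul_le_mul_of_nonneg_left hbx
                (mul_nonneg (mul_nonneg hnR.le (sub_nonneg.mpr hbX)) hb)
          _ ≤ X ^ (k+2) := hstep
      -- conclude
      have hXpow : X ^ (k+2) = ((n:ℝ)*Q)^(k+2) * x^(k+2) := by
        rw [hXdef, mul_pow]
      have hfinal : (n:ℝ) * b * (x - t*b) * (b+x)^(n-1) ≤ ((n:ℝ)*Q)^n * x^(n+1) := by
        have hnq : (0:ℝ) < (n:ℝ)*Q := by positivity
        rw [← le_div_iff₀ hnq] at hmain
        calc (n:ℝ) * b * (x - t*b) * (b+x)^(n-1) ≤ X ^ (k+2) / ((n:ℝ)*Q) := hmain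
          _ = ((n:ℝ)*Q)^(k+2) * x^(k+2) / ((n:ℝ)*Q) := by rw [hXpow]
          _ = ((n:ℝ)*Q)^(k+1) * x^(k+2) := by
              have hne : ((n:ℝ)*Q) ≠ 0 := ne_of_gt hnq
              rw [pow_succ ((n:ℝ)*Q) (k+1)]
              field_simp
          _ = ((n:ℝ)*Q)^n * x^(n+1) := by rw [hk]
      have hmono : ((n:ℝ)*Q)^n ≤ ((d:ℝ)*Q)^d := by
        have h1 : ((n:ℝ)*Q)^n ≤ ((d:ℝ)*Q)^n :=
          pow_le_pow_left₀ (mul_nonneg hnR.le hQ0.le)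
            (by nlinarith [mul_nonneg (sub_nonneg.mpr hndR) hQ0.le]) n
        have h2 : ((d:ℝ)*Q)^n ≤ ((d:ℝ)*Q)^d := by
          apply pow_le_pow_right₀ (by nlinarith [mul_lt_mul_of_pos_left hQ1 hdR, hd1R]) hnd
        linarith
      calc (n:ℝ) * b * (x - t*b) * (b+x)^(n-1) ≤ ((n:ℝ)*Q)^n * x^(n+1) := hfinal
        _ ≤ ((d:ℝ)*Q)^d * x^(n+1) := mul_le_mul_of_nonneg_right hmono (by positivity)
    -- assemble large case
    have hpow1 : y * (b + t*b)^n ≤ (1+ε) * y * b^n := by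
      calc y * (b+t*b)^n = y * ((1+t)^n * b^n) := by rw [← mul_pow]; ring_nf
        _ ≤ y * ((1+ε) * b^n) := by
            apply mul_le_mul_of_nonneg_left _ hy
            exact mul_le_mul_of_nonneg_right hK1 (pow_nonneg hb n)
        _ = (1+ε) * y * b^n := by ring
    have hdiff : y * ((b+x)^n - (b+t*b)^n) ≤ ((d:ℝ)*Q)^d * x^(n+1) := by
      calc y * ((b+x)^n - (b+t*b)^n)
          ≤ y * ((n:ℝ) * (x - t*b) * (b+x)^(n-1)) := by
            apply mul_le_mul_of_nonneg_left hK2 hy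
        _ ≤ b * ((n:ℝ) * (x - t*b) * (b+x)^(n-1)) := by
            apply mul_le_mul_of_nonneg_right hyb
            have hp : (0:ℝ) ≤ (b+x)^(n-1) := by positivity
            exact mul_nonneg (mul_nonneg hnR.le hxtb) hp
        _ = (n:ℝ) * b * (x - t*b) * (b+x)^(n-1) := by ring
        _ ≤ ((d:ℝ)*Q)^d * x^(n+1) := hKEY
    calc y * (b+x)^n = y * ((b+x)^n - (b+t*b)^n) + y * (b+t*b)^n := by ring
      _ ≤ ((d:ℝ)*Q)^d * x^(n+1) + (1+ε) * y * b^n := add_le_add hdiff hpow1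
      _ = (1+ε) * y * b^n + ((d:ℝ)*Q)^d * x^(n+1) := by ring

theorem monomial_smoothness (d : ℕ) (hd : 0 < d) (ε : ℝ) (hε : 0 < ε)
    (ν : ℕ) (hν : ν ≤ d) (x x' y y' z : ℝ)
    (hx : 0 ≤ x) (hx' : 0 ≤ x') (hy : 0 ≤ y) (hy' : 0 ≤ y') (hz : 0 ≤ z) :
    y * (z + x + y) ^ ν ≤
      (1 + ε) * y * (z + x' + y) ^ ν +
      (1 + 1 / ε) ^ d * (d : ℝ) ^ d * (x * (z + x + y') ^ ν) := by
  have hcnonneg : (0:ℝ) ≤ (1 + 1/ε) ^ d * (d:ℝ) ^ d := by positivity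
  rcases Nat.eq_zero_or_pos ν with hν0 | hν1
  · subst hν0
    simp only [pow_zero, mul_one]
    nlinarith [mul_nonneg hcnonneg hx, mul_nonneg hε.le hy]
  · have hcore := core_aux d ν hν1 hν ε hε (z + y) x y hx hy (by linarith)
    have e0 : z + x + y = (z + y) + x := by ring
    rw [e0]
    have h1 : (1 + ε) * y * (z+y)^ν ≤ (1 + ε) * y * (z + x' + y)^ν := by
      apply mul_le_mul_of_nonneg_left _ (by nlinarith : (0:ℝ) ≤ (1+ε)*y)
      exact pow_le_pow_left₀ (by linarith) (by linarith) ν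
    have h2 : ((d:ℝ) * (1 + 1/ε))^d * x^(ν+1)
        ≤ (1 + 1/ε) ^ d * (d:ℝ) ^ d * (x * (z + x + y')^ν) := by
      have e1 : ((d:ℝ) * (1 + 1/ε))^d = (1 + 1/ε) ^ d * (d:ℝ) ^ d := by
        rw [mul_pow]; ring
      rw [e1, pow_succ']
      apply mul_le_mul_of_nonneg_left _ hcnonneg
      apply mul_le_mul_of_nonneg_left _ hx
      exact pow_le_pow_left₀ hx (by linarith) ν
    linarith [hcore]
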